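/- arXiv:0705.1767 — 5 statements merged into one kernel-verified Lean document; each statement's English description precedes it below -/
import Mathlib

section
/- For the Cauchy location model, b(θ,u) := (2/π) ∫_ℝ [(x−u)/(1+(x−u)²)] · [1/(1+x²)] dx = −2u/(4+u²) for all u ∈ ℝ. -/
open MeasureTheory Filter Real Topology

lemma cauchy_integrable (u : ℝ) :
    Integrable fun x : ℝ => ((x - u) / (1 + (x - u) ^ 2)) * (1 / (1 + x ^ 2)) := by
  apply Integrable.mono' (integrable_inv_one_add_sq.const_mul (1/2))
  · exact (by fun_prop : Measurable fun x : ℝ =>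
      ((x - u) / (1 + (x - u) ^ 2)) * (1 / (1 + x ^ 2))).aestronglyMeasurable
  · refine Filter.Eventually.of_forall fun x => ?_
    have h1 : (0:ℝ) < 1 + (x - u) ^ 2 := by positivity
    have h2 : (0:ℝ) < 1 + x ^ 2 := by positivity
    rw [norm_mul, Real.norm_eq_abs, Real.norm_eq_abs, abs_div, abs_of_pos h1,
      abs_of_pos (by positivity : (0:ℝ) < 1 / (1 + x ^ 2)), one_div]
    have hb : |x - u| / (1 + (x - u) ^ 2) ≤ 1 / 2 := by
      rw [div_le_div_iff₀ h1 (by norm_num)]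
      nlinarith [sq_nonneg (|x - u| - 1), sq_abs (x - u)]
    calc |x - u| / (1 + (x - u) ^ 2) * (1 + x ^ 2)⁻¹
        ≤ 1 / 2 * (1 + x ^ 2)⁻¹ := by
          apply mul_le_mul_of_nonneg_right hb (by positivity)
      _ = _ := rfl

lemma tendsto_ratio_atTop (u : ℝ) :
    Tendsto (fun x : ℝ => (1 + (x - u) ^ 2) / (1 + x ^ 2)) atTop (𝓝 1) := by
  have hc : ContinuousAt (fun t : ℝ => (t ^ 2 + (1 - u * t) ^ 2) / (t ^ 2 + 1)) 0 :=
    ContinuousAt.div (by fun_prop) (by fun_prop) (by norm_num)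
  have h0 : Tendsto (fun x : ℝ => x⁻¹) atTop (𝓝 0) := tendsto_inv_atTop_zero
  have := (hc.tendsto.comp h0)
  norm_num at this
  refine this.congr' ?_
  filter_upwards [eventually_ge_atTop (1:ℝ)] with x hx
  have hx0 : x ≠ 0 := by linarith
  simp only [Function.comp_apply]
  field_simp

lemma tendsto_ratio_atBot (u : ℝ) :
    Tendsto (fun x : ℝ => (1 + (x - u) ^ 2) / (1 + x ^ 2)) atBot (𝓝 1) := by
  have hc : ContinuousAt (fun t : ℝ => (t ^ 2 + (1 - u * t) ^ 2) / (t ^ 2 + 1)) 0 :=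
    ContinuousAt.div (by fun_prop) (by fun_prop) (by norm_num)
  have h0 : Tendsto (fun x : ℝ => x⁻¹) atBot (𝓝 0) := by
    have := (tendsto_inv_atTop_zero (𝕜 := ℝ)).comp tendsto_neg_atBot_atTop
    have h2 := this.neg
    simp only [Function.comp] at h2 ⊢
    norm_num at h2
    exact h2
  have := (hc.tendsto.comp h0)
  norm_num at this
  refine this.congr' ?_
  filter_upwards [eventually_le_atBot (-1:ℝ)] with x hx
  have hx0 : x ≠ 0 := by linarith
  simp only [Function.comp_apply]
  field_simp

lemma tendsto_logdiff_atTop (u : ℝ) :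
    Tendsto (fun x : ℝ => Real.log (1 + (x - u) ^ 2) - Real.log (1 + x ^ 2)) atTop (𝓝 0) := by
  have h := (Real.continuousAt_log one_ne_zero).tendsto.comp (tendsto_ratio_atTop u)
  rw [Real.log_one] at h
  exact h.congr fun x => by
    rw [Function.comp_apply, Real.log_div (by positivity) (by positivity)]

lemma tendsto_logdiff_atBot (u : ℝ) :
    Tendsto (fun x : ℝ => Real.log (1 + (x - u) ^ 2) - Real.log (1 + x ^ 2)) atBot (𝓝 0) := by
  have h := (Real.continuousAt_log one_ne_zero).tendsto.comp (tendsto_ratio_atBot u)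
  rw [Real.log_one] at h
  exact h.congr fun x => by
    rw [Function.comp_apply, Real.log_div (by positivity) (by positivity)]

lemma tendsto_arctan_shift_atTop (u : ℝ) :
    Tendsto (fun x : ℝ => Real.arctan (x - u)) atTop (𝓝 (π / 2)) := by
  have := (Real.tendsto_arctan_atTop.mono_right nhdsWithin_le_nhds).comp
    (tendsto_atTop_add_const_right atTop (-u) tendsto_id)
  exact this.congr fun x => by simp [Function.comp, sub_eq_add_neg]

lemma tendsto_arctan_shift_atBot (u : ℝ) :
    Tendsto (fun x : ℝ => Real.arctan (x - u)) atBot (𝓝 (-(π / 2))) := by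
  have := (Real.tendsto_arctan_atBot.mono_right nhdsWithin_le_nhds).comp
    (tendsto_atBot_add_const_right atBot (-u) tendsto_id)
  exact this.congr fun x => by simp [Function.comp, sub_eq_add_neg]

theorem stmt5 (u : ℝ) :
    (2 / Real.pi) * ∫ x : ℝ, ((x - u) / (1 + (x - u) ^ 2)) * (1 / (1 + x ^ 2))
      = -(2 * u) / (4 + u ^ 2) := by
  rcases eq_or_ne u 0 with rfl | hu
  · -- u = 0 : antiderivative -(1/2)(1+x^2)⁻¹
    have hderiv : ∀ x : ℝ, HasDerivAt (fun x : ℝ => -(1/2) * (1 + x ^ 2)⁻¹)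
        (((x - 0) / (1 + (x - 0) ^ 2)) * (1 / (1 + x ^ 2))) x := by
      intro x
      have h1 : (0:ℝ) < 1 + x ^ 2 := by positivity
      have hg : HasDerivAt (fun x : ℝ => 1 + x ^ 2) (2 * x) x := by
        simpa using ((hasDerivAt_pow 2 x).const_add 1)
      have := (hg.inv h1.ne').const_mul (-(1/2) : ℝ)
      refine this.congr_deriv ?_
      field_simp
      ring
    have hsq : Tendsto (fun x : ℝ => 1 + x ^ 2) atTop atTop :=
      tendsto_atTop_add_const_left _ 1 (tendsto_pow_atTop two_ne_zero)
    have hsqb : Tendsto (fun x : ℝ => 1 + x ^ 2) atBot atTop := by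
      have : Tendsto (fun x : ℝ => x ^ 2) atBot atTop := by
        have := (tendsto_pow_atTop (two_ne_zero)).comp (tendsto_neg_atBot_atTop : Tendsto (fun x : ℝ => -x) atBot atTop)
        exact this.congr fun x => by simp [Function.comp, neg_pow]
      exact tendsto_atTop_add_const_left _ 1 this
    have htop : Tendsto (fun x : ℝ => -(1/2) * (1 + x ^ 2)⁻¹) atTop (𝓝 0) := by
      have := (tendsto_inv_atTop_zero.comp hsq).const_mul (-(1/2) : ℝ)
      simpa using this
    have hbot : Tendsto (fun x : ℝ => -(1/2) * (1 + x ^ 2)⁻¹) atBot (𝓝 0) := by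
      have := (tendsto_inv_atTop_zero.comp hsqb).const_mul (-(1/2) : ℝ)
      simpa using this
    rw [integral_of_hasDerivAt_of_tendsto hderiv (cauchy_integrable 0) hbot htop]
    simp
  · -- u ≠ 0
    set c : ℝ := (u ^ 2 + 4)⁻¹ with hc
    set F : ℝ → ℝ := fun x => c * ((1/2) * (Real.log (1 + (x - u) ^ 2) - Real.log (1 + x ^ 2))
      + (2 / u) * Real.arctan (x - u) - ((u ^ 2 + 2) / u) * Real.arctan x) with hF
    have hu4 : (u ^ 2 + 4 : ℝ) ≠ 0 := by positivity
    have hderiv : ∀ x : ℝ, HasDerivAt F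
        (((x - u) / (1 + (x - u) ^ 2)) * (1 / (1 + x ^ 2))) x := by
      intro x
      have h1 : (0:ℝ) < 1 + (x - u) ^ 2 := by positivity
      have h2 : (0:ℝ) < 1 + x ^ 2 := by positivity
      have hsub : HasDerivAt (fun x : ℝ => x - u) 1 x := (hasDerivAt_id x).sub_const u
      have hg1 : HasDerivAt (fun x : ℝ => 1 + (x - u) ^ 2) (2 * (x - u)) x := by
        have := ((hasDerivAt_pow 2 (x - u)).comp x hsub).const_add 1
        simpa using this
      have hlog1 : HasDerivAt (fun x : ℝ => Real.log (1 + (x - u) ^ 2))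
          (2 * (x - u) / (1 + (x - u) ^ 2)) x := hg1.log h1.ne'
      have hg2 : HasDerivAt (fun x : ℝ => 1 + x ^ 2) (2 * x) x := by
        simpa using ((hasDerivAt_pow 2 x).const_add 1)
      have hlog2 : HasDerivAt (fun x : ℝ => Real.log (1 + x ^ 2))
          (2 * x / (1 + x ^ 2)) x := hg2.log h2.ne'
      have harct1 : HasDerivAt (fun x : ℝ => Real.arctan (x - u))
          (1 / (1 + (x - u) ^ 2)) x := by
        have := (Real.hasDerivAt_arctan (x - u)).comp x hsub
        simpa [Function.comp_def] using this
      have harct2 : HasDerivAt Real.arctan (1 / (1 + x ^ 2)) x := Real.hasDerivAt_arctan x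
      have hcomb := ((((hlog1.sub hlog2).const_mul (1/2 : ℝ)).add
        (harct1.const_mul (2 / u))).sub (harct2.const_mul ((u ^ 2 + 2) / u))).const_mul c
      refine hcomb.congr_deriv ?_
      rw [hc]
      field_simp
      ring
    have htop : Tendsto F atTop (𝓝 (c * ((1/2) * 0 + (2/u) * (π/2) - ((u^2+2)/u) * (π/2)))) := by
      exact (((((tendsto_logdiff_atTop u).const_mul (1/2 : ℝ)).add
        ((tendsto_arctan_shift_atTop u).const_mul (2/u))).sub
        ((Real.tendsto_arctan_atTop.mono_right nhdsWithin_le_nhds).const_mul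
          ((u^2+2)/u))).const_mul c)
    have hbot : Tendsto F atBot (𝓝 (c * ((1/2) * 0 + (2/u) * (-(π/2)) - ((u^2+2)/u) * (-(π/2))))) := by
      exact (((((tendsto_logdiff_atBot u).const_mul (1/2 : ℝ)).add
        ((tendsto_arctan_shift_atBot u).const_mul (2/u))).sub
        ((Real.tendsto_arctan_atBot.mono_right nhdsWithin_le_nhds).const_mul
          ((u^2+2)/u))).const_mul c)
    rw [integral_of_hasDerivAt_of_tendsto hderiv (cauchy_integrable u) hbot htop]
    rw [hc]
    have hpi : Real.pi ≠ 0 := Real.pi_ne_zero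
    field_simp
    ring
end

section
/- For the Cauchy location model, (4/π) ∫_ℝ [(x−u)/(1+(x−u)²)]² · [1/(1+x²)] dx = 2(4+3u²)/(4+u²)² for all u ∈ ℝ. -/
open MeasureTheory Filter Real Topology

lemma linTop (p q : ℝ) : Tendsto (fun y : ℝ => (p*y+q)/(1+y^2)) atTop (𝓝 0) := by
  have h : Tendsto (fun y : ℝ => y⁻¹) atTop (𝓝 0) := tendsto_inv_atTop_zero
  have H : Tendsto (fun y : ℝ => (p * y⁻¹ + q * (y⁻¹ * y⁻¹)) / (y⁻¹ * y⁻¹ + 1)) atTop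
      (𝓝 ((p * 0 + q * (0 * 0)) / (0 * 0 + 1))) :=
    ((h.const_mul p).add ((h.mul h).const_mul q)).div ((h.mul h).add_const 1) (by norm_num)
  rw [show (p * 0 + q * (0 * 0)) / (0 * 0 + 1) = (0:ℝ) by norm_num] at H
  refine H.congr' ?_
  filter_upwards [eventually_ge_atTop (1:ℝ)] with y hy
  have hy0 : y ≠ 0 := by linarith
  have hd : (0:ℝ) < y⁻¹ * y⁻¹ + 1 := by nlinarith [mul_self_nonneg y⁻¹]
  rw [div_eq_div_iff hd.ne' (by positivity : (0:ℝ) < 1 + y^2).ne']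
  field_simp

lemma linBot (p q : ℝ) : Tendsto (fun y : ℝ => (p*y+q)/(1+y^2)) atBot (𝓝 0) := by
  have h : Tendsto (fun y : ℝ => y⁻¹) atBot (𝓝 0) := by
    have := (tendsto_inv_atTop_zero.comp tendsto_neg_atBot_atTop (α := ℝ)).neg
    simpa [inv_neg] using this
  have H : Tendsto (fun y : ℝ => (p * y⁻¹ + q * (y⁻¹ * y⁻¹)) / (y⁻¹ * y⁻¹ + 1)) atBot
      (𝓝 ((p * 0 + q * (0 * 0)) / (0 * 0 + 1))) :=
    ((h.const_mul p).add ((h.mul h).const_mul q)).div ((h.mul h).add_const 1) (by norm_num)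
  rw [show (p * 0 + q * (0 * 0)) / (0 * 0 + 1) = (0:ℝ) by norm_num] at H
  refine H.congr' ?_
  filter_upwards [eventually_le_atBot (-1:ℝ)] with y hy
  have hy0 : y ≠ 0 := by linarith
  have hd : (0:ℝ) < y⁻¹ * y⁻¹ + 1 := by nlinarith [mul_self_nonneg y⁻¹]
  rw [div_eq_div_iff hd.ne' (by positivity : (0:ℝ) < 1 + y^2).ne']
  field_simp

lemma shiftTop (u : ℝ) : Tendsto (fun x : ℝ => x - u) atTop atTop :=
  tendsto_atTop_add_const_right atTop (-u) tendsto_id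

lemma shiftBot (u : ℝ) : Tendsto (fun x : ℝ => x - u) atBot atBot :=
  tendsto_atBot_add_const_right atBot (-u) tendsto_id

lemma linTop' (p q u : ℝ) :
    Tendsto (fun x : ℝ => (p*(x-u)+q)/(1+(x-u)^2)) atTop (𝓝 0) :=
  (linTop p q).comp (shiftTop u)

lemma linBot' (p q u : ℝ) :
    Tendsto (fun x : ℝ => (p*(x-u)+q)/(1+(x-u)^2)) atBot (𝓝 0) :=
  (linBot p q).comp (shiftBot u)

lemma arcTop (u : ℝ) : Tendsto (fun x : ℝ => arctan (x - u)) atTop (𝓝 (π/2)) :=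
  (tendsto_nhds_of_tendsto_nhdsWithin tendsto_arctan_atTop).comp (shiftTop u)

lemma arcBot (u : ℝ) : Tendsto (fun x : ℝ => arctan (x - u)) atBot (𝓝 (-(π/2))) :=
  (tendsto_nhds_of_tendsto_nhdsWithin tendsto_arctan_atBot).comp (shiftBot u)

lemma sq_pos (x : ℝ) : (0:ℝ) < 1 + x ^ 2 := by positivity

lemma ratioTop (u : ℝ) :
    Tendsto (fun x : ℝ => Real.log (1+x^2) - Real.log (1+(x-u)^2)) atTop (𝓝 0) := by
  have h1 : Tendsto (fun x : ℝ => 1 + (2*u*(x-u)+u^2)/(1+(x-u)^2)) atTop (𝓝 1) := by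
    simpa using (linTop' (2*u) (u^2) u).const_add 1
  have h2 : Tendsto (fun x : ℝ => Real.log (1 + (2*u*(x-u)+u^2)/(1+(x-u)^2))) atTop (𝓝 0) := by
    simpa [Function.comp_def] using ((Real.continuousAt_log one_ne_zero).tendsto.comp h1)
  refine h2.congr (fun x => ?_)
  rw [show 1 + (2*u*(x-u)+u^2)/(1+(x-u)^2) = (1+x^2)/(1+(x-u)^2) by
        field_simp [(sq_pos (x-u)).ne']; ring,
      Real.log_div (sq_pos x).ne' (sq_pos (x-u)).ne']

lemma ratioBot (u : ℝ) :
    Tendsto (fun x : ℝ => Real.log (1+x^2) - Real.log (1+(x-u)^2)) atBot (𝓝 0) := by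
  have h1 : Tendsto (fun x : ℝ => 1 + (2*u*(x-u)+u^2)/(1+(x-u)^2)) atBot (𝓝 1) := by
    simpa using (linBot' (2*u) (u^2) u).const_add 1
  have h2 : Tendsto (fun x : ℝ => Real.log (1 + (2*u*(x-u)+u^2)/(1+(x-u)^2))) atBot (𝓝 0) := by
    simpa [Function.comp_def] using ((Real.continuousAt_log one_ne_zero).tendsto.comp h1)
  refine h2.congr (fun x => ?_)
  rw [show 1 + (2*u*(x-u)+u^2)/(1+(x-u)^2) = (1+x^2)/(1+(x-u)^2) by
        field_simp [(sq_pos (x-u)).ne']; ring,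
      Real.log_div (sq_pos x).ne' (sq_pos (x-u)).ne']

lemma integrable_g (u : ℝ) :
    Integrable (fun x : ℝ => ((x - u) / (1 + (x - u) ^ 2)) ^ 2 * (1 / (1 + x ^ 2))) := by
  have hc : Continuous (fun x : ℝ => ((x - u) / (1 + (x - u) ^ 2)) ^ 2 * (1 / (1 + x ^ 2))) := by
    apply Continuous.mul
    · exact (((continuous_id.sub continuous_const).div
        (continuous_const.add ((continuous_id.sub continuous_const).pow 2))
        (fun x => (sq_pos (x-u)).ne')).pow 2)
    · exact continuous_const.div (continuous_const.add (continuous_id.pow 2))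
        (fun x => (sq_pos x).ne')
  refine integrable_inv_one_add_sq.mono hc.aestronglyMeasurable ?_
  refine Filter.Eventually.of_forall (fun x => ?_)
  have h1 : (0:ℝ) < 1 + x ^ 2 := sq_pos x
  have h2 : (0:ℝ) < 1 + (x-u) ^ 2 := sq_pos (x-u)
  rw [Real.norm_eq_abs, Real.norm_eq_abs, abs_of_nonneg (by positivity),
    abs_of_nonneg (by positivity : (0:ℝ) ≤ (1+x^2)⁻¹)]
  have hle : ((x - u) / (1 + (x - u) ^ 2)) ^ 2 ≤ 1 := by
    rw [div_pow, div_le_one (by positivity)]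
    nlinarith [sq_nonneg ((x-u)^2)]
  calc ((x - u) / (1 + (x - u) ^ 2)) ^ 2 * (1 / (1 + x ^ 2))
      ≤ 1 * (1 / (1 + x ^ 2)) := by
        apply mul_le_mul_of_nonneg_right hle (by positivity)
    _ = (1 + x ^ 2)⁻¹ := by rw [one_mul, one_div]


lemma hasDeriv_F (u : ℝ) (hu : u ≠ 0) (x : ℝ) :
    HasDerivAt (fun x : ℝ =>
      (u^2+2)/(u*(u^2+4)^2) * (Real.log (1+x^2) - Real.log (1+(x-u)^2))
      + (u^4+3*u^2+4)/(u^2*(u^2+4)^2) * Real.arctan x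
      + ((u^4+u^2-4)/(u^2*(u^2+4)^2) + (-1/(u^2+4))/2) * Real.arctan (x-u)
      + ((-1/(u^2+4))*(x-u) - 2/(u*(u^2+4)))/(2*(1+(x-u)^2)))
    (((x - u) / (1 + (x - u) ^ 2)) ^ 2 * (1 / (1 + x ^ 2))) x := by
  have hp : HasDerivAt (fun x : ℝ => 1+x^2) (2*x) x := by
    simpa using (hasDerivAt_pow 2 x).const_add 1
  have hq : HasDerivAt (fun x : ℝ => 1+(x-u)^2) (2*(x-u)) x := by
    have := (((hasDerivAt_id x).sub_const u).pow 2).const_add 1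
    simpa using this
  have h1 : HasDerivAt (fun x : ℝ => Real.log (1+x^2)) (2*x/(1+x^2)) x :=
    hp.log (sq_pos x).ne'
  have h2 : HasDerivAt (fun x : ℝ => Real.log (1+(x-u)^2)) (2*(x-u)/(1+(x-u)^2)) x :=
    hq.log (sq_pos (x-u)).ne'
  have h3 : HasDerivAt Real.arctan (1/(1+x^2)) x := Real.hasDerivAt_arctan x
  have h4 : HasDerivAt (fun x : ℝ => Real.arctan (x-u)) (1/(1+(x-u)^2)) x := by
    have := (Real.hasDerivAt_arctan (x-u)).comp x ((hasDerivAt_id x).sub_const u)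
    simpa [Function.comp_def] using this
  have hn : HasDerivAt (fun x : ℝ => (-1/(u^2+4))*(x-u) - 2/(u*(u^2+4))) (-1/(u^2+4)) x := by
    have := (((hasDerivAt_id x).sub_const u).const_mul ((-1)/(u^2+4))).sub_const (2/(u*(u^2+4)))
    simpa using this
  have hdn : HasDerivAt (fun x : ℝ => 2*(1+(x-u)^2)) (2*(2*(x-u))) x := hq.const_mul 2
  have h5 := hn.div hdn (by positivity : (2*(1+(x-u)^2)) ≠ 0)
  have H := ((((h1.sub h2).const_mul ((u^2+2)/(u*(u^2+4)^2))).add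
      (h3.const_mul ((u^4+3*u^2+4)/(u^2*(u^2+4)^2)))).add
      (h4.const_mul ((u^4+u^2-4)/(u^2*(u^2+4)^2) + (-1/(u^2+4))/2))).add h5
  refine H.congr_deriv ?_
  have e1 : (1+x^2) ≠ 0 := (sq_pos x).ne'
  have e2 : (1+(x-u)^2) ≠ 0 := (sq_pos (x-u)).ne'
  have e3 : (u^2+4) ≠ 0 := by positivity
  field_simp
  ring


lemma hasDeriv_G (x : ℝ) :
    HasDerivAt (fun x : ℝ => (1/8) * Real.arctan x + (x^3-x)/(8*(1+x^2)^2))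
    (((x - 0) / (1 + (x - 0) ^ 2)) ^ 2 * (1 / (1 + x ^ 2))) x := by
  have h3 : HasDerivAt Real.arctan (1/(1+x^2)) x := Real.hasDerivAt_arctan x
  have hn : HasDerivAt (fun x : ℝ => x^3-x) (3*x^2-1) x := by
    have := (hasDerivAt_pow 3 x).sub (hasDerivAt_id x)
    simpa [Pi.sub_def] using this
  have hdn : HasDerivAt (fun x : ℝ => 8*(1+x^2)^2) (8*(2*(1+x^2)*(2*x))) x := by
    have h0 : HasDerivAt (fun x : ℝ => 1+x^2) (2*x) x := by
      simpa using (hasDerivAt_pow 2 x).const_add 1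
    exact (h0.pow 2).const_mul 8 |>.congr_deriv (by ring)
  have h5 := hn.div hdn (by positivity : (8*(1+x^2)^2) ≠ 0)
  have H := (h3.const_mul (1/8 : ℝ)).add h5
  refine H.congr_deriv ?_
  have e1 : (1+x^2) ≠ 0 := (sq_pos x).ne'
  field_simp
  ring


theorem stmt6 (u : ℝ) :
    (4 / Real.pi) * ∫ x : ℝ, ((x - u) / (1 + (x - u) ^ 2)) ^ 2 * (1 / (1 + x ^ 2))
      = 2 * (4 + 3 * u ^ 2) / (4 + u ^ 2) ^ 2 := by
  rcases eq_or_ne u 0 with rfl | hu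
  · -- u = 0
    have htop : Tendsto (fun x : ℝ => (1/8) * Real.arctan x + (x^3-x)/(8*(1+x^2)^2))
        atTop (𝓝 (π/16)) := by
      have t1 : Tendsto (fun x : ℝ => (1/8) * Real.arctan x) atTop (𝓝 ((1/8)*(π/2))) :=
        (tendsto_nhds_of_tendsto_nhdsWithin tendsto_arctan_atTop).const_mul (1/8)
      have t2 : Tendsto (fun x : ℝ => (x^3-x)/(8*(1+x^2)^2)) atTop (𝓝 0) := by
        have h := ((linTop 1 0).const_mul (1/8:ℝ)).sub
          (((linTop 1 0).mul (linTop 0 1)).const_mul (1/4:ℝ))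
        rw [show (1/8:ℝ)*0 - (1/4:ℝ)*(0*0) = 0 by norm_num] at h
        refine h.congr (fun x => ?_)
        have e1 : (1+x^2) ≠ 0 := (sq_pos x).ne'
        field_simp
        ring
      have := t1.add t2
      rw [show (1/8:ℝ)*(π/2) + 0 = π/16 by ring] at this
      exact this
    have hbot : Tendsto (fun x : ℝ => (1/8) * Real.arctan x + (x^3-x)/(8*(1+x^2)^2))
        atBot (𝓝 (-(π/16))) := by
      have t1 : Tendsto (fun x : ℝ => (1/8) * Real.arctan x) atBot (𝓝 ((1/8)*(-(π/2)))) :=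
        (tendsto_nhds_of_tendsto_nhdsWithin tendsto_arctan_atBot).const_mul (1/8)
      have t2 : Tendsto (fun x : ℝ => (x^3-x)/(8*(1+x^2)^2)) atBot (𝓝 0) := by
        have h := ((linBot 1 0).const_mul (1/8:ℝ)).sub
          (((linBot 1 0).mul (linBot 0 1)).const_mul (1/4:ℝ))
        rw [show (1/8:ℝ)*0 - (1/4:ℝ)*(0*0) = 0 by norm_num] at h
        refine h.congr (fun x => ?_)
        have e1 : (1+x^2) ≠ 0 := (sq_pos x).ne'
        field_simp
        ring
      have := t1.add t2
      rw [show (1/8:ℝ)*(-(π/2)) + 0 = -(π/16) by ring] at this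
      exact this
    have key := integral_of_hasDerivAt_of_tendsto hasDeriv_G (integrable_g 0) hbot htop
    rw [key]
    rw [show π/16 - -(π/16) = π/8 by ring]
    field_simp
    ring
  · -- u ≠ 0
    set a2 : ℝ := (u^2+2)/(u*(u^2+4)^2) with ha2
    set b : ℝ := (u^4+3*u^2+4)/(u^2*(u^2+4)^2) with hb
    set cd : ℝ := (u^4+u^2-4)/(u^2*(u^2+4)^2) + (-1/(u^2+4))/2 with hcd
    have t4top : Tendsto (fun x : ℝ =>
        ((-1/(u^2+4))*(x-u) - 2/(u*(u^2+4)))/(2*(1+(x-u)^2))) atTop (𝓝 0) := by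
      refine (linTop' ((-1/(u^2+4))/2) (-(2/(u*(u^2+4)))/2) u).congr (fun x => ?_)
      have e1 : (1+(x-u)^2) ≠ 0 := (sq_pos (x-u)).ne'
      have e3 : (u^2+4) ≠ 0 := by positivity
      field_simp
      ring
    have t4bot : Tendsto (fun x : ℝ =>
        ((-1/(u^2+4))*(x-u) - 2/(u*(u^2+4)))/(2*(1+(x-u)^2))) atBot (𝓝 0) := by
      refine (linBot' ((-1/(u^2+4))/2) (-(2/(u*(u^2+4)))/2) u).congr (fun x => ?_)
      have e1 : (1+(x-u)^2) ≠ 0 := (sq_pos (x-u)).ne'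
      have e3 : (u^2+4) ≠ 0 := by positivity
      field_simp
      ring
    have htop : Tendsto (fun x : ℝ =>
        a2 * (Real.log (1+x^2) - Real.log (1+(x-u)^2))
        + b * Real.arctan x + cd * Real.arctan (x-u)
        + ((-1/(u^2+4))*(x-u) - 2/(u*(u^2+4)))/(2*(1+(x-u)^2)))
        atTop (𝓝 (a2 * 0 + b * (π/2) + cd * (π/2) + 0)) :=
      ((((ratioTop u).const_mul a2).add
        ((tendsto_nhds_of_tendsto_nhdsWithin tendsto_arctan_atTop).const_mul b)).add
        ((arcTop u).const_mul cd)).add t4top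
    have hbot : Tendsto (fun x : ℝ =>
        a2 * (Real.log (1+x^2) - Real.log (1+(x-u)^2))
        + b * Real.arctan x + cd * Real.arctan (x-u)
        + ((-1/(u^2+4))*(x-u) - 2/(u*(u^2+4)))/(2*(1+(x-u)^2)))
        atBot (𝓝 (a2 * 0 + b * (-(π/2)) + cd * (-(π/2)) + 0)) :=
      ((((ratioBot u).const_mul a2).add
        ((tendsto_nhds_of_tendsto_nhdsWithin tendsto_arctan_atBot).const_mul b)).add
        ((arcBot u).const_mul cd)).add t4bot
    have key := integral_of_hasDerivAt_of_tendsto (hasDeriv_F u hu) (integrable_g u) hbot htop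
    rw [key, ha2, hb, hcd]
    have e3 : (u^2+4) ≠ 0 := by positivity
    have e4 : (4+u^2) ≠ 0 := by positivity
    field_simp
    ring
end

section
/- (Robbins–Siegmund) Let (ℱ_n)_{n≥0} be a filtration and X_n, β_n, ξ_n, ζ_n nonnegative ℱ_n-measurable random variables satisfying E[X_n | ℱ_{n−1}] ≤ X_{n−1}(1+β_{n−1}) + ξ_{n−1} − ζ_{n−1} for all sufficiently large n. Then almost surely on the event {∑ ξ_{n−1} < ∞} ∩ {∑ β_{n−1} < ∞}, the limit lim_n X_n exists and is finite and ∑ ζ_{n−1} < ∞. -/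
open MeasureTheory Filter

open Finset

theorem rs_aux {Ω : Type*} {m0 : MeasurableSpace Ω} {μ : Measure Ω} [IsProbabilityMeasure μ]
    (𝒢 : Filtration ℕ m0) (Y ξ ζ : ℕ → Ω → ℝ)
    (hYmeas : ∀ n, StronglyMeasurable[𝒢 n] (Y n))
    (hξmeas : ∀ n, StronglyMeasurable[𝒢 n] (ξ n))
    (hζmeas : ∀ n, StronglyMeasurable[𝒢 n] (ζ n))
    (hYint : ∀ n, Integrable (Y n) μ)
    (hξint : ∀ n, Integrable (ξ n) μ)
    (hζint : ∀ n, Integrable (ζ n) μ)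
    (hY0 : ∀ n ω, 0 ≤ Y n ω) (hξ0 : ∀ n ω, 0 ≤ ξ n ω) (hζ0 : ∀ n ω, 0 ≤ ζ n ω)
    (hrec : ∀ n, μ[Y (n + 1) | 𝒢 n] ≤ᵐ[μ] fun ω => Y n ω + ξ n ω - ζ n ω) :
    ∀ᵐ ω ∂μ, (Summable fun n => ξ n ω) →
      (∃ L : ℝ, Tendsto (fun n => Y n ω) atTop (nhds L)) ∧ Summable fun n => ζ n ω := by
  classical
  set A : ℕ → Ω → ℝ := fun n => ∑ k ∈ range n, ξ k with hA
  set B : ℕ → Ω → ℝ := fun n => ∑ k ∈ range n, ζ k with hB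
  set Z : ℕ → Ω → ℝ := fun n ω => Y n ω - A n ω + B n ω with hZdef
  have hAeval : ∀ n ω, A n ω = ∑ k ∈ range n, ξ k ω := by
    intro n ω; simp [hA]
  have hBeval : ∀ n ω, B n ω = ∑ k ∈ range n, ζ k ω := by
    intro n ω; simp [hB]
  have hAmeas : ∀ n, StronglyMeasurable[𝒢 n] (A n) := fun n =>
    Finset.stronglyMeasurable_sum _ fun k hk =>
      ((hξmeas k).mono (𝒢.mono (Finset.mem_range.1 hk).le))
  have hBmeas : ∀ n, StronglyMeasurable[𝒢 n] (B n) := fun n =>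
    Finset.stronglyMeasurable_sum _ fun k hk =>
      ((hζmeas k).mono (𝒢.mono (Finset.mem_range.1 hk).le))
  have hAmeas' : ∀ n, StronglyMeasurable[𝒢 n] (A (n + 1)) := fun n =>
    Finset.stronglyMeasurable_sum _ fun k hk =>
      ((hξmeas k).mono (𝒢.mono (Nat.lt_succ_iff.1 (Finset.mem_range.1 hk))))
  have hBmeas' : ∀ n, StronglyMeasurable[𝒢 n] (B (n + 1)) := fun n =>
    Finset.stronglyMeasurable_sum _ fun k hk =>
      ((hζmeas k).mono (𝒢.mono (Nat.lt_succ_iff.1 (Finset.mem_range.1 hk))))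
  have hAint : ∀ n, Integrable (A n) μ := fun n =>
    integrable_finset_sum' _ fun k _ => hξint k
  have hBint : ∀ n, Integrable (B n) μ := fun n =>
    integrable_finset_sum' _ fun k _ => hζint k
  have hZmeas : ∀ n, StronglyMeasurable[𝒢 n] (Z n) := fun n =>
    ((hYmeas n).sub (hAmeas n)).add (hBmeas n)
  have hZint : ∀ n, Integrable (Z n) μ := fun n =>
    ((hYint n).sub (hAint n)).add (hBint n)
  -- Z is a supermartingale
  have hZ : Supermartingale Z 𝒢 μ := by
    refine supermartingale_nat (fun n => hZmeas n) hZint fun n => ?_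
    have h1 : μ[Z (n + 1)|𝒢 n] =ᵐ[μ]
        fun ω => (μ[Y (n + 1)|𝒢 n]) ω - A (n + 1) ω + B (n + 1) ω := by
      have e1 : Z (n + 1) = (Y (n + 1) - A (n + 1)) + B (n + 1) := rfl
      calc μ[Z (n + 1)|𝒢 n]
          =ᵐ[μ] μ[Y (n + 1) - A (n + 1)|𝒢 n] + μ[B (n + 1)|𝒢 n] := by
            rw [e1]; exact condExp_add ((hYint _).sub (hAint _)) (hBint _) (𝒢 n)
        _ =ᵐ[μ] (μ[Y (n + 1)|𝒢 n] - μ[A (n + 1)|𝒢 n]) + μ[B (n + 1)|𝒢 n] := by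
            filter_upwards [condExp_sub (hYint (n + 1)) (hAint (n + 1)) (𝒢 n)] with ω hω
            simp only [Pi.add_apply, Pi.sub_apply] at *
            rw [hω]
        _ =ᵐ[μ] fun ω => (μ[Y (n + 1)|𝒢 n]) ω - A (n + 1) ω + B (n + 1) ω := by
            rw [condExp_of_stronglyMeasurable (𝒢.le n) (hAmeas' n) (hAint (n + 1)),
              condExp_of_stronglyMeasurable (𝒢.le n) (hBmeas' n) (hBint (n + 1))]
            exact Eventually.of_forall fun ω => rfl
    filter_upwards [h1, hrec n] with ω h1ω h2ω
    have hAs : A (n + 1) ω = A n ω + ξ n ω := by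
      simp [hAeval, Finset.sum_range_succ]
    have hBs : B (n + 1) ω = B n ω + ζ n ω := by
      simp [hBeval, Finset.sum_range_succ]
    have h1ω' : (μ[Z (n + 1)|𝒢 n]) ω = (μ[Y (n + 1)|𝒢 n]) ω - A (n + 1) ω + B (n + 1) ω := h1ω
    have h5 : Z n ω = Y n ω - A n ω + B n ω := rfl
    rw [h5, h1ω', hAs, hBs]; linarith
  have hB0 : ∀ n ω, 0 ≤ B n ω := fun n ω => by
    rw [hBeval]; exact Finset.sum_nonneg fun k _ => hζ0 k ω
  have hZ00 : ∀ ω, Z 0 ω = Y 0 ω := fun ω => by simp [hZdef, hA, hB]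
  -- predictable indicator of the sum of ξ's staying below level a
  set c : ℕ → ℕ → Ω → ℝ := fun a n ω => if A (n + 1) ω ≤ (a : ℝ) then (1 : ℝ) else 0 with hc
  have hcmeas : ∀ a n, StronglyMeasurable[𝒢 n] (c a n) := by
    intro a n
    have hs : MeasurableSet[𝒢 n] {ω | A (n + 1) ω ≤ (a : ℝ)} :=
      measurableSet_le (hAmeas' n).measurable measurable_const
    exact stronglyMeasurable_const.ite hs stronglyMeasurable_const
  have hcbdd : ∀ a n ω, c a n ω ≤ 1 := by
    intro a n ω; rw [hc]; dsimp only; split <;> norm_num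
  have hc0 : ∀ a n ω, 0 ≤ c a n ω := by
    intro a n ω; rw [hc]; dsimp only; split <;> norm_num
  -- the stopped process as a discrete stochastic integral
  set W : ℕ → ℕ → Ω → ℝ :=
    fun a n => ∑ k ∈ range n, c a k * ((-Z) (k + 1) - (-Z) k) with hWdef
  have hW : ∀ a, Submartingale (W a) 𝒢 μ := fun a =>
    hZ.neg.sum_mul_sub (fun n => hcmeas a n) (hcbdd a) (hc0 a)
  have hWeval : ∀ a n ω, W a n ω = ∑ k ∈ range n, c a k ω * (Z k ω - Z (k + 1) ω) := by
    intro a n ω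
    rw [hWdef]
    simp only [Finset.sum_apply, Pi.mul_apply, Pi.sub_apply, Pi.neg_apply]
    congr 1; ext k; ring
  -- key pointwise identity/bound
  have key : ∀ (a : ℕ) (ω : Ω) (n : ℕ),
      (A n ω ≤ (a : ℝ) → Z 0 ω - W a n ω = Z n ω) ∧ -(a : ℝ) ≤ Z 0 ω - W a n ω := by
    intro a ω n
    induction n with
    | zero =>
      have h0 : W a 0 ω = 0 := by simp [hWeval]
      constructor
      · intro _; rw [h0, sub_zero]
      · rw [h0, sub_zero, hZ00]
        have := hY0 0 ω
        have : (0:ℝ) ≤ (a:ℝ) := Nat.cast_nonneg a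
        linarith [hY0 0 ω]
    | succ n ih =>
      have hWs : W a (n + 1) ω = W a n ω + c a n ω * (Z n ω - Z (n + 1) ω) := by
        rw [hWeval, hWeval, Finset.sum_range_succ]
      by_cases h : A (n + 1) ω ≤ (a : ℝ)
      · have hc1 : c a n ω = 1 := if_pos h
        have hAmono : A n ω ≤ A (n + 1) ω := by
          rw [hAeval, hAeval, Finset.sum_range_succ]
          exact le_add_of_nonneg_right (hξ0 n ω)
        have heq := ih.1 (hAmono.trans h)
        have hZ1 : Z (n + 1) ω = Y (n + 1) ω - A (n + 1) ω + B (n + 1) ω := rfl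
        have hz1 : -(a : ℝ) ≤ Z (n + 1) ω := by
          rw [hZ1]; linarith [hY0 (n + 1) ω, hB0 (n + 1) ω]
        constructor
        · intro _; rw [hWs, hc1]; linarith
        · rw [hWs, hc1]; linarith
      · have hcz : c a n ω = 0 := if_neg h
        refine ⟨fun h' => absurd h' h, ?_⟩
        rw [hWs, hcz, zero_mul, add_zero]
        exact ih.2
  have hWle : ∀ a n ω, W a n ω ≤ Y 0 ω + a := by
    intro a n ω
    have := (key a ω n).2
    have h0 := hZ00 ω
    linarith
  -- L¹ bound
  have hWint : ∀ a n, Integrable (W a n) μ := fun a n => (hW a).integrable n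
  have hWnn : ∀ a n, (0 : ℝ) ≤ ∫ ω, W a n ω ∂μ := by
    intro a n
    have h0 : ∫ ω, W a 0 ω ∂μ = 0 := by
      have : ∀ ω, W a 0 ω = 0 := fun ω => by simp [hWeval]
      simp [funext this]
    have hle := (hW a).setIntegral_le (Nat.zero_le n) (MeasurableSet.univ)
    rw [Measure.restrict_univ] at hle
    rw [← h0]; exact hle
  have hsnorm : ∀ a n, eLpNorm (W a n) 1 μ ≤ ENNReal.ofReal (2 * ∫ ω, Y 0 ω ∂μ + 2 * a) := by
    intro a n
    rw [eLpNorm_one_eq_lintegral_enorm, ← ofReal_integral_norm_eq_lintegral_enorm (hWint a n)]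
    apply ENNReal.ofReal_le_ofReal
    have habs : ∀ ω, ‖W a n ω‖ ≤ 2 * (Y 0 ω + a) - W a n ω := by
      intro ω
      have h1 := hWle a n ω
      have h2 := hY0 0 ω
      have h3 : (0:ℝ) ≤ (a:ℝ) := Nat.cast_nonneg a
      rw [Real.norm_eq_abs]
      rcases abs_cases (W a n ω) with ⟨he, _⟩ | ⟨he, _⟩ <;> rw [he] <;> linarith
    have hint2 : Integrable (fun ω => 2 * (Y 0 ω + (a:ℝ)) - W a n ω) μ :=
      (((hYint 0).add (integrable_const _)).const_mul 2).sub (hWint a n)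
    calc ∫ ω, ‖W a n ω‖ ∂μ ≤ ∫ ω, (2 * (Y 0 ω + a) - W a n ω) ∂μ :=
          integral_mono (hWint a n).norm hint2 habs
      _ = 2 * (∫ ω, Y 0 ω ∂μ + a) - ∫ ω, W a n ω ∂μ := by
          have hint2a : Integrable (fun ω => 2 * (Y 0 ω + (a : ℝ))) μ :=
            ((hYint 0).add (integrable_const _)).const_mul 2
          have hint2b : Integrable (fun ω => Y 0 ω + (a : ℝ)) μ :=
            (hYint 0).add (integrable_const _)
          rw [integral_sub hint2a (hWint a n), integral_const_mul,
            integral_add (hYint 0) (integrable_const _), integral_const]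
          simp
      _ ≤ 2 * ∫ ω, Y 0 ω ∂μ + 2 * a := by linarith [hWnn a n]
  have hconv : ∀ᵐ ω ∂μ, ∀ a : ℕ, ∃ cl : ℝ, Tendsto (fun n => W a n ω) atTop (nhds cl) := by
    rw [ae_all_iff]
    intro a
    exact (hW a).exists_ae_tendsto_of_bdd
      (R := (2 * ∫ ω, Y 0 ω ∂μ + 2 * a).toNNReal) fun n => hsnorm a n
  -- conclusion
  filter_upwards [hconv] with ω hω hsum
  set a : ℕ := ⌈∑' n, ξ n ω⌉₊ with ha
  have hAa : ∀ n, A n ω ≤ (a : ℝ) := by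
    intro n
    rw [hAeval]
    exact le_trans (Summable.sum_le_tsum (range n) (fun k _ => hξ0 k ω) hsum) (Nat.le_ceil _)
  have hZeq : ∀ n, Z n ω = Z 0 ω - W a n ω := fun n => ((key a ω n).1 (hAa n)).symm
  obtain ⟨cl, hcl⟩ := hω a
  have hZconv : Tendsto (fun n => Z n ω) atTop (nhds (Z 0 ω - cl)) := by
    refine Tendsto.congr (fun n => (hZeq n).symm) ?_
    exact tendsto_const_nhds.sub hcl
  have hAconv : Tendsto (fun n => A n ω) atTop (nhds (∑' n, ξ n ω)) := by
    refine Tendsto.congr (fun n => (hAeval n ω).symm) ?_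
    exact hsum.hasSum.tendsto_sum_nat
  have hYB : Tendsto (fun n => Y n ω + B n ω) atTop
      (nhds (Z 0 ω - cl + ∑' n, ξ n ω)) := by
    refine Tendsto.congr (fun n => ?_) (hZconv.add hAconv)
    have : Z n ω = Y n ω - A n ω + B n ω := rfl
    rw [this]; ring
  obtain ⟨Mb, hMb⟩ := hYB.bddAbove_range
  have hζsum : Summable fun n => ζ n ω := by
    refine summable_of_sum_range_le (fun n => hζ0 n ω) (fun n => ?_) (c := Mb)
    have h1 : Y n ω + B n ω ≤ Mb := hMb ⟨n, rfl⟩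
    have h2 := hY0 n ω
    have h3 := hBeval n ω
    rw [← h3]; linarith
  refine ⟨⟨Z 0 ω - cl + ∑' n, ξ n ω - ∑' n, ζ n ω, ?_⟩, hζsum⟩
  have hBconv : Tendsto (fun n => B n ω) atTop (nhds (∑' n, ζ n ω)) := by
    refine Tendsto.congr (fun n => (hBeval n ω).symm) ?_
    exact hζsum.hasSum.tendsto_sum_nat
  refine Tendsto.congr (fun n => ?_) (hYB.sub hBconv)
  ring

theorem stmt9 {Ω : Type*} {m0 : MeasurableSpace Ω} {μ : Measure Ω} [IsProbabilityMeasure μ]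
    (ℱ : Filtration ℕ m0) (X β ξ ζ : ℕ → Ω → ℝ)
    (hXmeas : ∀ n, StronglyMeasurable[ℱ n] (X n))
    (hβmeas : ∀ n, StronglyMeasurable[ℱ n] (β n))
    (hξmeas : ∀ n, StronglyMeasurable[ℱ n] (ξ n))
    (hζmeas : ∀ n, StronglyMeasurable[ℱ n] (ζ n))
    (hXint : ∀ n, Integrable (X n) μ) (hβint : ∀ n, Integrable (β n) μ)
    (hξint : ∀ n, Integrable (ξ n) μ) (hζint : ∀ n, Integrable (ζ n) μ)
    (hX0 : ∀ n ω, 0 ≤ X n ω) (hβ0 : ∀ n ω, 0 ≤ β n ω)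
    (hξ0 : ∀ n ω, 0 ≤ ξ n ω) (hζ0 : ∀ n ω, 0 ≤ ζ n ω)
    (hrec : ∀ᶠ n in atTop, ∀ᵐ ω ∂μ,
      (μ[X (n + 1) | ℱ n]) ω ≤ X n ω * (1 + β n ω) + ξ n ω - ζ n ω) :
    ∀ᵐ ω ∂μ, (Summable fun n => ξ n ω) → (Summable fun n => β n ω) →
      (∃ L : ℝ, Tendsto (fun n => X n ω) atTop (nhds L)) ∧ Summable fun n => ζ n ω := by
  classical
  rw [eventually_atTop] at hrec
  obtain ⟨N, hN⟩ := hrec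
  -- shifted filtration
  set 𝒢 : Filtration ℕ m0 :=
    { seq := fun n => ℱ (n + N)
      mono' := fun i j hij => ℱ.mono (by omega)
      le' := fun n => ℱ.le (n + N) } with h𝒢
  -- the product of the (1 + β)'s
  set P : ℕ → Ω → ℝ := fun n => ∏ k ∈ Finset.range n, (1 + β (k + N)) with hP
  have hPeval : ∀ n ω, P n ω = ∏ k ∈ Finset.range n, (1 + β (k + N) ω) := by
    intro n ω; rw [hP]; simp
  have hP1 : ∀ n ω, 1 ≤ P n ω := fun n ω => by
    rw [hPeval]
    have := Finset.prod_le_prod (s := Finset.range n) (f := fun _ => (1 : ℝ))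
      (g := fun k => 1 + β (k + N) ω) (fun k _ => zero_le_one)
      (fun k _ => le_add_of_nonneg_right (hβ0 _ ω))
    simpa using this
  have hP0 : ∀ n ω, (0 : ℝ) < P n ω := fun n ω => lt_of_lt_of_le one_pos (hP1 n ω)
  have hPsucc : ∀ n ω, P (n + 1) ω = P n ω * (1 + β (n + N) ω) := fun n ω => by
    rw [hPeval, hPeval, Finset.prod_range_succ]
  have hPinv1 : ∀ n ω, (P n ω)⁻¹ ≤ 1 := fun n ω => by
    rw [inv_le_one_iff₀]; exact Or.inr (hP1 n ω)
  have hPinv0 : ∀ n ω, (0 : ℝ) ≤ (P n ω)⁻¹ := fun n ω => inv_nonneg.2 (hP0 n ω).le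
  have hPmeas : ∀ m n, m ≤ n + 1 → StronglyMeasurable[ℱ (n + N)] (P m) := by
    intro m n hmn
    rw [hP]
    refine Finset.stronglyMeasurable_prod _ fun k hk => ?_
    have hkn : k + N ≤ n + N := by
      have := Finset.mem_range.1 hk; omega
    exact stronglyMeasurable_const.add ((hβmeas (k + N)).mono (ℱ.mono hkn))
  -- transformed processes
  set Y : ℕ → Ω → ℝ := fun n => (fun ω => (P n ω)⁻¹) * X (n + N) with hY
  set ξ' : ℕ → Ω → ℝ := fun n ω => (P (n + 1) ω)⁻¹ * ξ (n + N) ω with hξ'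
  set ζ' : ℕ → Ω → ℝ := fun n ω => (P (n + 1) ω)⁻¹ * ζ (n + N) ω with hζ'
  have hYeval : ∀ n ω, Y n ω = (P n ω)⁻¹ * X (n + N) ω := fun n ω => rfl
  have hYmeas : ∀ n, StronglyMeasurable[ℱ (n + N)] (Y n) := by
    intro n
    exact (((hPmeas n n n.le_succ).measurable.inv).stronglyMeasurable).mul
      (hXmeas (n + N))
  have hξ'meas : ∀ n, StronglyMeasurable[ℱ (n + N)] (ξ' n) := by
    intro n
    exact (((hPmeas (n + 1) n le_rfl).measurable.inv).stronglyMeasurable).mul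
      (hξmeas (n + N))
  have hζ'meas : ∀ n, StronglyMeasurable[ℱ (n + N)] (ζ' n) := by
    intro n
    exact (((hPmeas (n + 1) n le_rfl).measurable.inv).stronglyMeasurable).mul
      (hζmeas (n + N))
  have hbddinv : ∀ m, ∃ C, ∀ ω, |(P m ω)⁻¹| ≤ C := fun m =>
    ⟨1, fun ω => by rw [abs_of_nonneg (hPinv0 m ω)]; exact hPinv1 m ω⟩
  have hPinvmeas : ∀ m, AEStronglyMeasurable (fun ω => (P m ω)⁻¹) μ := by
    intro m
    exact ((((hPmeas m m m.le_succ).mono (ℱ.le (m + N))).measurable.inv).stronglyMeasurable).aestronglyMeasurable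
  have hYint : ∀ n, Integrable (Y n) μ := fun n =>
    (hXint (n + N)).bdd_mul (hPinvmeas n) (Eventually.of_forall fun ω => by rw [Real.norm_eq_abs, abs_of_nonneg (hPinv0 n ω)]; exact hPinv1 n ω)
  have hξ'int : ∀ n, Integrable (ξ' n) μ := fun n =>
    (hξint (n + N)).bdd_mul (hPinvmeas (n + 1)) (Eventually.of_forall fun ω => by rw [Real.norm_eq_abs, abs_of_nonneg (hPinv0 (n + 1) ω)]; exact hPinv1 (n + 1) ω)
  have hζ'int : ∀ n, Integrable (ζ' n) μ := fun n =>
    (hζint (n + N)).bdd_mul (hPinvmeas (n + 1)) (Eventually.of_forall fun ω => by rw [Real.norm_eq_abs, abs_of_nonneg (hPinv0 (n + 1) ω)]; exact hPinv1 (n + 1) ω)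
  have hY0 : ∀ n ω, 0 ≤ Y n ω := fun n ω =>
    mul_nonneg (hPinv0 n ω) (hX0 (n + N) ω)
  have hξ'0 : ∀ n ω, 0 ≤ ξ' n ω := fun n ω =>
    mul_nonneg (hPinv0 (n + 1) ω) (hξ0 (n + N) ω)
  have hζ'0 : ∀ n ω, 0 ≤ ζ' n ω := fun n ω =>
    mul_nonneg (hPinv0 (n + 1) ω) (hζ0 (n + N) ω)
  -- the recursion for Y
  have hrec' : ∀ n, μ[Y (n + 1) | ℱ (n + N)] ≤ᵐ[μ] fun ω => Y n ω + ξ' n ω - ζ' n ω := by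
    intro n
    have hidx : n + 1 + N = n + N + 1 := by omega
    have hYe : Y (n + 1) = (fun ω => (P (n + 1) ω)⁻¹) * X (n + N + 1) := by
      rw [← hidx]
    have hfg : Integrable ((fun ω => (P (n + 1) ω)⁻¹) * X (n + N + 1)) μ :=
      (hXint (n + N + 1)).bdd_mul (hPinvmeas (n + 1)) (Eventually.of_forall fun ω => by rw [Real.norm_eq_abs, abs_of_nonneg (hPinv0 (n + 1) ω)]; exact hPinv1 (n + 1) ω)
    have hmul := condExp_mul_of_stronglyMeasurable_left (μ := μ)
      (((hPmeas (n + 1) n le_rfl).measurable.inv).stronglyMeasurable) hfg (hXint (n + N + 1))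
    rw [hYe]
    filter_upwards [hmul, hN (n + N) (Nat.le_add_left N n)] with ω h1 h2
    have h1' : (μ[(fun ω => (P (n + 1) ω)⁻¹) * X (n + N + 1)|ℱ (n + N)]) ω
        = (P (n + 1) ω)⁻¹ * (μ[X (n + N + 1)|ℱ (n + N)]) ω := h1
    rw [h1']
    have hb : (0 : ℝ) < 1 + β (n + N) ω := by linarith [hβ0 (n + N) ω]
    have hchain : (P (n + 1) ω)⁻¹ * (μ[X (n + N + 1)|ℱ (n + N)]) ω
        ≤ (P (n + 1) ω)⁻¹ * (X (n + N) ω * (1 + β (n + N) ω) + ξ (n + N) ω - ζ (n + N) ω) :=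
      mul_le_mul_of_nonneg_left h2 (hPinv0 (n + 1) ω)
    have hfin : (P (n + 1) ω)⁻¹ * (X (n + N) ω * (1 + β (n + N) ω) + ξ (n + N) ω - ζ (n + N) ω)
        = Y n ω + ξ' n ω - ζ' n ω := by
      rw [hYeval, hξ', hζ']
      dsimp only
      rw [hPsucc n ω]
      have h1 : P n ω ≠ 0 := (hP0 n ω).ne'
      field_simp
    linarith [hchain, hfin.symm.le, hfin.le]
  -- apply the reduced version with the shifted filtration
  have hae := rs_aux 𝒢 Y ξ' ζ'
    (fun n => hYmeas n) (fun n => hξ'meas n) (fun n => hζ'meas n)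
    hYint hξ'int hζ'int hY0 hξ'0 hζ'0 (fun n => hrec' n)
  filter_upwards [hae] with ω h hsξ hsβ
  -- summability of the transformed perturbations
  have hβshift : Summable fun n => β (n + N) ω := (summable_nat_add_iff N).2 hsβ
  have hξshift : Summable fun n => ξ (n + N) ω := (summable_nat_add_iff N).2 hsξ
  have hξ's : Summable fun n => ξ' n ω := by
    refine Summable.of_nonneg_of_le (fun n => hξ'0 n ω) (fun n => ?_) hξshift
    rw [hξ']
    exact mul_le_of_le_one_left (hξ0 (n + N) ω) (hPinv1 (n + 1) ω)
  obtain ⟨⟨L, hLY⟩, hζ's⟩ := h hξ's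
  -- convergence of the product
  have hPmono : Monotone fun n => P n ω := by
    refine monotone_nat_of_le_succ fun n => ?_
    rw [hPsucc n ω]
    nlinarith [hP0 n ω, hβ0 (n + N) ω]
  have hPbdd : BddAbove (Set.range fun n => P n ω) := by
    refine ⟨Real.exp (∑' k, β (k + N) ω), ?_⟩
    rintro _ ⟨n, rfl⟩
    calc P n ω = ∏ k ∈ Finset.range n, (1 + β (k + N) ω) := hPeval n ω
      _ ≤ ∏ k ∈ Finset.range n, Real.exp (β (k + N) ω) := by
          refine Finset.prod_le_prod (fun k _ => by linarith [hβ0 (k + N) ω]) fun k _ => ?_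
          linarith [Real.add_one_le_exp (β (k + N) ω)]
      _ = Real.exp (∑ k ∈ Finset.range n, β (k + N) ω) := (Real.exp_sum _ _).symm
      _ ≤ Real.exp (∑' k, β (k + N) ω) := by
          refine Real.exp_le_exp.2 ?_
          exact Summable.sum_le_tsum _ (fun k _ => hβ0 (k + N) ω) hβshift
  set Pl : ℝ := ⨆ n, P n ω with hPl
  have hPlim : Tendsto (fun n => P n ω) atTop (nhds Pl) := tendsto_atTop_ciSup hPmono hPbdd
  have hPle : ∀ n, P n ω ≤ Pl := fun n => le_ciSup hPbdd n
  -- convergence of X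
  have hXconv : Tendsto (fun n => X (n + N) ω) atTop (nhds (L * Pl)) := by
    refine Tendsto.congr (fun n => ?_) (hLY.mul hPlim)
    rw [hYeval]
    rw [mul_comm, ← mul_assoc, mul_inv_cancel₀ (hP0 n ω).ne', one_mul]
  refine ⟨⟨L * Pl, (tendsto_add_atTop_iff_nat N).1 hXconv⟩, ?_⟩
  -- summability of ζ
  have hζshift : Summable fun n => ζ (n + N) ω := by
    refine Summable.of_nonneg_of_le (fun n => hζ0 (n + N) ω) (fun n => ?_) (hζ's.mul_left Pl)
    have he : ζ (n + N) ω = P (n + 1) ω * ζ' n ω := by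
      rw [hζ']
      dsimp only
      rw [← mul_assoc, mul_inv_cancel₀ (hP0 (n + 1) ω).ne', one_mul]
    rw [he]
    exact mul_le_mul_of_nonneg_right (hPle (n + 1)) (hζ'0 n ω)
  exact (summable_nat_add_iff N).1 hζshift
end

section
/- Suppose for each t, a_t > 0 is nondecreasing with a_t → ∞, Δa_t/a_{t−1} → 0, and λ_t, η_t are real sequences with η_t = Δa_t/a_t − λ_t and ∑_t [η_t]^+ < ∞. Fix δ ∈ (0,1/2) and set r_t = (a_t/a_{t−1})^{2δ}(1 − λ_t) − 1. Then ∑_t [r_t]^+ < ∞. -/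
open Filter

theorem stmt11 {δ : ℝ} (hδ : 0 < δ) (hδ' : δ < 1 / 2)
    (a lam : ℕ → ℝ) (hpos : ∀ t, 0 < a t) (hmono : Monotone a)
    (htop : Tendsto a atTop atTop)
    (hratio : Tendsto (fun t => (a (t + 1) - a t) / a t) atTop (nhds 0))
    (η : ℕ → ℝ) (hη : ∀ t, η t = (a (t + 1) - a t) / a (t + 1) - lam t)
    (hsum : Summable fun t => max (η t) 0) :
    Summable fun t => max ((a (t + 1) / a t) ^ (2 * δ) * (1 - lam t) - 1) 0 := by
  -- the ratio sequence tends to 1, hence is bounded above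
  have hρpos : ∀ t, 0 < a (t + 1) / a t := fun t => div_pos (hpos _) (hpos _)
  have hρ1 : ∀ t, 1 ≤ a (t + 1) / a t := fun t =>
    (one_le_div (hpos t)).2 (hmono (Nat.le_succ t))
  have hlim : Tendsto (fun t => a (t + 1) / a t) atTop (nhds 1) := by
    have h := hratio.add (tendsto_const_nhds (x := (1 : ℝ)))
    rw [zero_add] at h
    refine h.congr fun t => ?_
    rw [eq_div_iff (hpos t).ne', add_mul, div_mul_cancel₀ _ (hpos t).ne', one_mul]
    ring
  obtain ⟨C, hC⟩ := hlim.bddAbove_range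
  have hC' : ∀ t, a (t + 1) / a t ≤ C := fun t => hC ⟨t, rfl⟩
  have hC1 : 1 ≤ C := le_trans (hρ1 0) (hC' 0)
  -- pointwise bound
  refine Summable.of_nonneg_of_le (fun t => le_max_right _ _)
    (fun t => ?_) (hsum.mul_left C)
  set ρ := a (t + 1) / a t with hρ
  have hlam : 1 - lam t = ρ⁻¹ + η t := by
    have h1 : a (t + 1) ≠ 0 := (hpos _).ne'
    have h2 : a t ≠ 0 := (hpos t).ne'
    rw [hη t]
    rw [hρ, inv_div, sub_div, div_self h1]
    ring
  have hkey : ρ ^ (2 * δ) * (1 - lam t) - 1 ≤ C * max (η t) 0 := by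
    rw [hlam, mul_add]
    have e1 : ρ ^ (2 * δ) * ρ⁻¹ = ρ ^ (2 * δ - 1) := by
      rw [Real.rpow_sub (hρpos t), Real.rpow_one, div_eq_mul_inv]
    have e2 : ρ ^ (2 * δ - 1) ≤ 1 :=
      Real.rpow_le_one_of_one_le_of_nonpos (hρ1 t) (by linarith)
    have e3 : ρ ^ (2 * δ) ≤ C := by
      calc ρ ^ (2 * δ) ≤ C ^ (2 * δ) :=
            Real.rpow_le_rpow (le_of_lt (hρpos t)) (hC' t) (by positivity)
        _ ≤ C ^ (1 : ℝ) := Real.rpow_le_rpow_of_exponent_le hC1 (by linarith)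
        _ = C := Real.rpow_one C
    have e4 : ρ ^ (2 * δ) * η t ≤ C * max (η t) 0 := by
      calc ρ ^ (2 * δ) * η t ≤ ρ ^ (2 * δ) * max (η t) 0 := by
            exact mul_le_mul_of_nonneg_left (le_max_left _ _)
              (le_of_lt (Real.rpow_pos_of_pos (hρpos t) _))
        _ ≤ C * max (η t) 0 :=
            mul_le_mul_of_nonneg_right e3 (le_max_right _ _)
    nlinarith [e1, e2, e4]
  have hCmax : 0 ≤ C * max (η t) 0 :=
    mul_nonneg (by linarith) (le_max_right _ _)
  exact max_le hkey hCmax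
end

section
/- Let γ : ℝ → ℝ be twice continuously differentiable with γ̈ > 0, and suppose there is B > 0 with (1 + γ̇(u)²)/γ̈(u)² ≤ B(1+u²) for all u. Then there exists a constant B̃ > 0 (depending on θ) such that for all u ≠ 0, |(γ̇(θ) − γ̇(θ+u))/(u·γ̈(θ+u))| ≤ B̃·max(1, √(1/u² + 1)). -/
theorem stmt17 (γ : ℝ → ℝ) (hγ : ContDiff ℝ 2 γ)
    (hpos : ∀ u, 0 < deriv (deriv γ) u)
    (B : ℝ) (hB : 0 < B)
    (hbound : ∀ u, (1 + deriv γ u ^ 2) / (deriv (deriv γ) u) ^ 2 ≤ B * (1 + u ^ 2))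
    (θ : ℝ) :
    ∃ Bt > (0 : ℝ), ∀ u : ℝ, u ≠ 0 →
      |(deriv γ θ - deriv γ (θ + u)) / (u * deriv (deriv γ) (θ + u))|
        ≤ Bt * max 1 (Real.sqrt (1 / u ^ 2 + 1)) := by
  set f := deriv γ with hfdef
  set g := deriv (deriv γ) with hgdef
  have h2 : ContDiff ℝ ((1 : ℕ) + 1) γ := hγ
  have hf1 : ContDiff ℝ 1 f := (contDiff_succ_iff_deriv.mp h2).2.2
  have hfd : Differentiable ℝ f := hf1.differentiable one_ne_zero
  have hgc : Continuous g := by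
    have h1 : ContDiff ℝ ((0 : ℕ) + 1) f := hf1
    exact ((contDiff_succ_iff_deriv.mp h1).2.2).continuous
  have hθK : θ ∈ Set.Icc (θ - 1) (θ + 1) := by constructor <;> linarith
  obtain ⟨xm, hxm, hxmle⟩ :=
    isCompact_Icc.exists_isMinOn (α := ℝ) ⟨θ, hθK⟩ hgc.continuousOn
  obtain ⟨xM, hxM, hxMge⟩ :=
    isCompact_Icc.exists_isMaxOn (α := ℝ) ⟨θ, hθK⟩ hgc.continuousOn
  set m := g xm with hm
  set M := g xM with hM
  have hm0 : 0 < m := hpos xm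
  have hM0 : 0 < M := hpos xM
  set D := Real.sqrt (B * (3 + 2 * θ ^ 2)) with hD
  set K2 := (|f θ| + 1) * D with hK2
  have hK2nn : 0 ≤ K2 := by positivity
  set C := max (M / m) K2 with hC
  have hCnn : 0 ≤ C := le_trans hK2nn (le_max_right _ _)
  refine ⟨C + 1, by linarith, ?_⟩
  intro u hu
  have hc : 0 < g (θ + u) := hpos (θ + u)
  have hmain : |(f θ - f (θ + u)) / (u * g (θ + u))| ≤ C := by
    rcases le_or_gt |u| 1 with hsm | hlg
    · -- small u : mean value theorem
      obtain ⟨ξ, hξK, hkey⟩ :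
          ∃ ξ ∈ Set.Icc (θ - 1) (θ + 1), f θ - f (θ + u) = -(g ξ * u) := by
        rcases hu.lt_or_gt with hneg | hposu
        · have hlt : θ + u < θ := by linarith
          obtain ⟨ξ, hξ, heq⟩ := exists_deriv_eq_slope f hlt
            hfd.continuous.continuousOn hfd.differentiableOn
          have hu1 : -1 ≤ u := by
            have := abs_le.mp hsm; linarith [this.1]
          refine ⟨ξ, ⟨by linarith [hξ.1], by linarith [hξ.2]⟩, ?_⟩
          have h' : g ξ = (f θ - f (θ + u)) / -u := by
            simpa using heq
          rw [eq_div_iff (neg_ne_zero.mpr hu)] at h'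
          linarith
        · have hlt : θ < θ + u := by linarith
          obtain ⟨ξ, hξ, heq⟩ := exists_deriv_eq_slope f hlt
            hfd.continuous.continuousOn hfd.differentiableOn
          have hu1 : u ≤ 1 := by
            have := abs_le.mp hsm; linarith [this.2]
          refine ⟨ξ, ⟨by linarith [hξ.1], by linarith [hξ.2]⟩, ?_⟩
          have h' : g ξ = (f (θ + u) - f θ) / u := by
            simpa using heq
          rw [eq_div_iff hu] at h'
          linarith
      have hξ0 : 0 < g ξ := hpos ξ
      have hrw : (f θ - f (θ + u)) / (u * g (θ + u)) = -(g ξ / g (θ + u)) := by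
        rw [hkey]
        field_simp
      rw [hrw, abs_neg, abs_of_pos (div_pos hξ0 hc)]
      have hθuK : θ + u ∈ Set.Icc (θ - 1) (θ + 1) := by
        have := abs_le.mp hsm
        constructor <;> linarith [this.1, this.2]
      have h1 : g ξ ≤ M := hxMge hξK
      have h2' : m ≤ g (θ + u) := hxmle hθuK
      calc g ξ / g (θ + u) ≤ M / m := div_le_div₀ hM0.le h1 hm0 h2'
        _ ≤ C := le_max_left _ _
    · -- large u
      have hu2 : 1 ≤ u ^ 2 := by
        have := sq_abs u
        nlinarith
      set c := g (θ + u) with hcdef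
      have hXc : 1 + f (θ + u) ^ 2 ≤ B * (1 + (θ + u) ^ 2) * c ^ 2 := by
        have h := hbound (θ + u)
        rw [div_le_iff₀ (by positivity)] at h
        linarith
      have hX2 : B * (1 + (θ + u) ^ 2) ≤ B * (3 + 2 * θ ^ 2) * u ^ 2 := by
        have h0 : 1 + (θ + u) ^ 2 ≤ (3 + 2 * θ ^ 2) * u ^ 2 := by
          nlinarith [sq_nonneg (θ - u),
            mul_nonneg (sub_nonneg.mpr hu2) (by positivity : (0:ℝ) ≤ 1 + 2 * θ ^ 2)]
        rw [mul_assoc]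
        exact mul_le_mul_of_nonneg_left h0 hB.le
      have hbig : 1 + f (θ + u) ^ 2 ≤ B * (3 + 2 * θ ^ 2) * u ^ 2 * c ^ 2 := by
        nlinarith [sq_nonneg c]
      have hDuc : 0 ≤ D * |u| * c := by positivity
      have hsq : (D * |u| * c) ^ 2 = B * (3 + 2 * θ ^ 2) * u ^ 2 * c ^ 2 := by
        rw [mul_pow, mul_pow, hD, Real.sq_sqrt (by positivity), sq_abs]
      have h1c : 1 ≤ D * |u| * c := by
        nlinarith [sq_nonneg (D * |u| * c - 1)]
      have h2c : |f (θ + u)| ≤ D * |u| * c := by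
        have h := Real.sqrt_le_sqrt (show f (θ + u) ^ 2 ≤ (D * |u| * c) ^ 2 by
          rw [hsq]; nlinarith)
        rwa [Real.sqrt_sq_eq_abs, Real.sqrt_sq hDuc] at h
      have hnum : |f θ - f (θ + u)| ≤ K2 * (|u| * c) := by
        have h3 : |f θ| ≤ |f θ| * (D * |u| * c) :=
          le_mul_of_one_le_right (abs_nonneg _) h1c
        calc |f θ - f (θ + u)| ≤ |f θ| + |f (θ + u)| := abs_sub _ _
          _ ≤ |f θ| * (D * |u| * c) + D * |u| * c := add_le_add h3 h2c
          _ = K2 * (|u| * c) := by rw [hK2]; ring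
      have habs : |(f θ - f (θ + u)) / (u * c)| = |f θ - f (θ + u)| / (|u| * c) := by
        rw [abs_div, abs_mul, abs_of_pos hc]
      rw [habs]
      have huc : 0 < |u| * c := by
        have : 0 < |u| := abs_pos.mpr hu
        positivity
      calc |f θ - f (θ + u)| / (|u| * c) ≤ K2 := by
            rw [div_le_iff₀ huc]
            exact hnum
        _ ≤ C := le_max_right _ _
  have hmax1 : 1 ≤ max 1 (Real.sqrt (1 / u ^ 2 + 1)) := le_max_left _ _
  calc |(f θ - f (θ + u)) / (u * g (θ + u))| ≤ C := hmain
    _ ≤ C + 1 := by linarith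
    _ ≤ (C + 1) * max 1 (Real.sqrt (1 / u ^ 2 + 1)) :=
        le_mul_of_one_le_right (by linarith) hmax1
end
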